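/- Let m be a positive integer such that 4m² − 1 is square-free, and let α be a root of f = mx² + x + m. Then f is irreducible over ℚ, K = ℚ(α) is an imaginary quadratic field with discriminant D = 1 − 4m², and H(α)/√|D| = m/√(4m² − 1). In particular H(α)/√|D|tends to 1/2 as m → ∞. -/

import Mathlib

open NumberField IntermediateField Polynomial Filter

private lemma aux_den_one (d : ℤ) (hsf : Squarefree d) (b : ℚ) (n : ℤ)
    (h : (n:ℚ) = (d:ℚ) * b^2) : ∃ z : ℤ, (z:ℚ) = b := by
  have hden : ((b.den : ℚ)) ≠ 0 := by exact_mod_cast b.den_nz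
  have hb : (b.num : ℚ) = b * b.den := (Rat.mul_den_eq_num b).symm
  have key : n * (b.den:ℤ)^2 = d * b.num^2 := by
    have : (n:ℚ) * (b.den:ℚ)^2 = (d:ℚ) * (b.num:ℚ)^2 := by
      rw [h, hb]; ring
    exact_mod_cast this
  have hdvd : ((b.den:ℤ))^2 ∣ d := by
    have h1 : ((b.den:ℤ))^2 ∣ d * b.num^2 := ⟨n, by linarith [key]⟩
    rw [mul_comm] at h1
    have hcop : IsCoprime ((b.den:ℤ)^2) (b.num^2) := by
      have : IsCoprime ((b.den:ℤ)) b.num := by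
        rw [Int.isCoprime_iff_gcd_eq_one, Int.gcd_comm]
        exact b.reduced
      exact this.pow
    exact hcop.dvd_of_dvd_mul_left h1
  have : IsUnit ((b.den:ℤ)) := hsf _ (by rwa [← sq])
  have hden1 : b.den = 1 := by
    rcases Int.isUnit_iff.mp this with h1 | h1
    · exact_mod_cast h1
    · exfalso; omega
  exact ⟨b.num, by rw [← Rat.num_div_den b, hden1]; simp⟩

set_option maxHeartbeats 1000000 in
theorem small_generators_imaginary_quadratic_example
    (m : ℤ) (hm : 0 < m) (hsf : Squarefree (4 * m ^ 2 - 1))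
    (K : Type*) [Field K] [NumberField K]
    (α : K) (hroot : (m : K) * α ^ 2 + α + (m : K) = 0)
    (hgen : ℚ⟮α⟯ = ⊤) :
    Irreducible (Polynomial.C (m : ℚ) * Polynomial.X ^ 2 + Polynomial.X +
        Polynomial.C (m : ℚ)) ∧
    Module.finrank ℚ K = 2 ∧
    NumberField.discr K = 1 - 4 * m ^ 2 ∧ NumberField.discr K < 0 ∧
    ((max |m| (max |1| |m|) : ℤ) : ℝ) / Real.sqrt |(NumberField.discr K : ℝ)| =
      (m : ℝ) / Real.sqrt (4 * (m : ℝ) ^ 2 - 1) ∧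
    Tendsto (fun k : ℕ => (k : ℝ) / Real.sqrt (4 * (k : ℝ) ^ 2 - 1)) atTop (nhds (1 / 2)) := by
  have hm1 : (1:ℚ) ≤ (m:ℚ) := by exact_mod_cast hm
  have hmK : (m:K) ≠ 0 := by
    exact_mod_cast (Int.cast_injective (α := K)).ne_iff.mpr hm.ne'
  -- the element β = m α
  set β : K := (m:K) * α with hβdef
  have hβ : β^2 + β + (m:K)^2 = 0 := by
    have : β^2 + β + (m:K)^2 = (m:K) * ((m : K) * α ^ 2 + α + (m : K)) := by ring
    rw [this, hroot, mul_zero]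
  -- no rational point
  have hmap : algebraMap ℚ K ((m:ℚ)^2) = (m:K)^2 := by
    rw [show ((m:ℚ)^2) = ((m^2 : ℤ):ℚ) by push_cast; ring, map_intCast]
    push_cast; ring
  have hirr : ∀ r : ℚ, β ≠ algebraMap ℚ K r := by
    intro r h
    have h0 : (algebraMap ℚ K) (r^2 + r + (m:ℚ)^2) = (algebraMap ℚ K) 0 := by
      rw [map_zero, map_add, map_add, map_pow, hmap, ← h]
      exact hβ
    have : r^2 + r + (m:ℚ)^2 = 0 := (algebraMap ℚ K).injective h0
    nlinarith [sq_nonneg (r + 1/2)]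
  -- the monic minimal polynomial q of β
  set q : ℚ[X] := X ^ 2 + X + C ((m:ℚ)^2) with hqdef
  have hqdeg : q.natDegree = 2 := by rw [hqdef]; compute_degree!
  have hqmonic : q.Monic := by
    rw [hqdef]
    rw [add_assoc]
    apply monic_X_pow_add
    rw [degree_X_add_C]
    decide
  have hqirr : Irreducible q := by
    rw [Polynomial.irreducible_iff_roots_eq_zero_of_degree_le_three (by omega) (by omega)]
    rw [Multiset.eq_zero_iff_forall_notMem]
    intro r hr
    rw [mem_roots hqmonic.ne_zero, IsRoot.def] at hr
    have : r^2 + r + (m:ℚ)^2 = 0 := by simpa [q] using hr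
    nlinarith [sq_nonneg (r + 1/2)]
  have haeval : aeval β q = 0 := by
    rw [hqdef]
    simp only [map_add, map_pow, aeval_X, aeval_C]
    rw [map_intCast]
    exact hβ
  have hβint : IsIntegral ℚ β := IsIntegral.of_finite ℚ β
  have hminq : minpoly ℚ β = q := (minpoly.eq_of_irreducible_of_monic hqirr haeval hqmonic).symm
  -- β generates K
  have hβgen : ℚ⟮β⟯ = ⊤ := by
    rw [← hgen]
    apply le_antisymm
    · rw [adjoin_simple_le_iff]
      exact mul_mem (by exact_mod_cast intCast_mem (ℚ⟮α⟯) m) (mem_adjoin_simple_self ℚ α)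
    · rw [adjoin_simple_le_iff]
      have : α = (m:K)⁻¹ * β := by
        field_simp [hβdef]
        linear_combination -hβdef
      rw [this]
      exact mul_mem (inv_mem (by exact_mod_cast intCast_mem (ℚ⟮β⟯) m))
        (mem_adjoin_simple_self ℚ β)
  -- finrank
  have hrank : Module.finrank ℚ K = 2 := by
    rw [← IntermediateField.finrank_top' (F := ℚ) (E := K), ← hβgen,
      IntermediateField.adjoin.finrank hβint, hminq, hqdeg]
  -- power basis with generator β
  have hf1 : Irreducible (Polynomial.C (m : ℚ) * Polynomial.X ^ 2 + Polynomial.X +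
      Polynomial.C (m : ℚ)) := by
    set f : ℚ[X] := C (m:ℚ) * X ^ 2 + X + C (m:ℚ) with hf
    have hm0 : (m:ℚ) ≠ 0 := by exact_mod_cast hm.ne'
    have hdeg : f.natDegree = 2 := by
      rw [hf]; compute_degree!; exact_mod_cast hm.ne'
    rw [Polynomial.irreducible_iff_roots_eq_zero_of_degree_le_three (by omega) (by omega)]
    rw [Multiset.eq_zero_iff_forall_notMem]
    intro r hr
    have hq0 : f ≠ 0 := fun h => by simp [h] at hdeg
    rw [mem_roots hq0, IsRoot.def] at hr
    have : (m:ℚ) * r^2 + r + (m:ℚ) = 0 := by simpa [f] using hr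
    nlinarith [sq_nonneg (r + 1), sq_nonneg (r-1), sq_nonneg r]
  -- traces
  set pb : PowerBasis ℚ K :=
    (IntermediateField.adjoin.powerBasis hβint).map
      ((IntermediateField.equivOfEq hβgen).trans IntermediateField.topEquiv) with hpbdef
  have hpbgen : pb.gen = β := by
    rw [hpbdef, PowerBasis.map_gen, IntermediateField.adjoin.powerBasis_gen]
    simp
  have hc1 : q.coeff 1 = 1 := by
    rw [hqdef]
    rw [coeff_add, coeff_add, coeff_X_pow, coeff_X_one, coeff_C]
    norm_num
  have htrβ : Algebra.trace ℚ K β = -1 := by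
    have := pb.trace_gen_eq_nextCoeff_minpoly
    rw [hpbgen, hminq] at this
    rw [this, Polynomial.nextCoeff_of_natDegree_pos (by rw [hqdeg]; omega), hqdeg]
    norm_num [hc1]
  have htr1 : Algebra.trace ℚ K 1 = 2 := by
    have := Algebra.trace_algebraMap (R := ℚ) (S := K) 1
    rw [map_one] at this
    rw [this, hrank]
    norm_num
  have hT : ∀ a b : ℚ, Algebra.trace ℚ K ((a:K) + (b:K) * β) = 2*a - b := by
    intro a b
    have h1 : (a:K) + (b:K) * β = a • (1:K) + b • β := by
      rw [Algebra.smul_def, Algebra.smul_def, eq_ratCast (algebraMap ℚ K),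
        eq_ratCast (algebraMap ℚ K), mul_one]
    rw [h1, map_add, map_smul, map_smul, htr1, htrβ, smul_eq_mul, smul_eq_mul]
    ring
  -- β is integral over ℤ
  have hβintZ : IsIntegral ℤ β := by
    refine ⟨X ^ 2 + X + C (m^2 : ℤ), ?_, ?_⟩
    · rw [add_assoc]
      apply monic_X_pow_add
      rw [degree_X_add_C]
      decide
    · simp only [eval₂_add, eval₂_pow, eval₂_X, eval₂_C]
      rw [show ((algebraMap ℤ K) (m^2)) = (m:K)^2 by rw [eq_intCast (algebraMap ℤ K)]; push_cast; ring]
      exact hβ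
  set B : 𝓞 K := ⟨β, hβintZ⟩ with hBdef
  -- ℚ-linear independence of 1, β
  have liQ : LinearIndependent ℚ ![(1:K), β] := by
    rw [LinearIndependent.pair_iff]
    intro s t hst
    by_cases ht : t = 0
    · subst ht
      simp only [smul_eq_mul, zero_smul, add_zero, smul_eq_zero, one_ne_zero, or_false] at hst
      exact ⟨by simpa using hst, rfl⟩
    · exfalso
      apply hirr (-s/t)
      rw [eq_ratCast (algebraMap ℚ K)]
      push_cast
      have hs : s • (1:K) = (s:K) := by rw [Algebra.smul_def, eq_ratCast (algebraMap ℚ K), mul_one]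
      have htk : t • β = (t:K) * β := by rw [Algebra.smul_def, eq_ratCast (algebraMap ℚ K)]
      rw [hs, htk] at hst
      have htK : (t:K) ≠ 0 := by exact_mod_cast ht
      field_simp
      linear_combination hst
  -- spanning: every algebraic integer is a ℤ-combination of 1 and β
  have hspan : ∀ x : 𝓞 K, ∃ a' bz : ℤ, x = a' • 1 + bz • B := by
    intro x
    set y : K := (x : K) with hydef
    -- decompose y over ℚ
    obtain ⟨a, b, hy⟩ : ∃ a b : ℚ, y = (a:K) + (b:K) * β := by
      have hcard : Fintype.card (Fin 2) = Module.finrank ℚ K := by simp [hrank]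
      set bQ := basisOfLinearIndependentOfCardEqFinrank liQ hcard with hbQ
      have hsum := bQ.sum_repr y
      rw [Fin.sum_univ_two] at hsum
      refine ⟨bQ.repr y 0, bQ.repr y 1, ?_⟩
      have h0 : bQ 0 = (1:K) := by rw [hbQ, coe_basisOfLinearIndependentOfCardEqFinrank]; rfl
      have h1 : bQ 1 = β := by rw [hbQ, coe_basisOfLinearIndependentOfCardEqFinrank]; rfl
      rw [h0, h1, Algebra.smul_def, Algebra.smul_def, eq_ratCast (algebraMap ℚ K),
        eq_ratCast (algebraMap ℚ K), mul_one] at hsum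
      exact hsum.symm
    -- trace integrality
    have tr_int : ∀ z : K, IsIntegral ℤ z → ∃ t : ℤ, (t:ℚ) = Algebra.trace ℚ K z := by
      intro z hz
      exact IsIntegrallyClosed.isIntegral_iff.mp (Algebra.isIntegral_trace hz)
    have hxint : IsIntegral ℤ y := x.2
    obtain ⟨t1, ht1⟩ := tr_int y hxint
    obtain ⟨t3, ht3⟩ := tr_int (y * y) (hxint.mul hxint)
    have htr_y : Algebra.trace ℚ K y = 2*a - b := by rw [hy]; exact hT a b
    have hy2 : y * y = ((a^2 - (m:ℚ)^2*b^2 :ℚ):K) + (((2*a*b - b^2):ℚ):K) * β := by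
      rw [hy]; push_cast; linear_combination ((b:K)^2) * hβ
    have htr_y2 : Algebra.trace ℚ K (y*y) = 2*(a^2 - (m:ℚ)^2*b^2) - (2*a*b - b^2) := by
      rw [hy2]; exact hT _ _
    -- b is an integer
    obtain ⟨bz, hbz⟩ : ∃ z : ℤ, (z:ℚ) = b := by
      apply aux_den_one (4*m^2-1) hsf b (t1^2 - 2*t3)
      push_cast
      rw [ht1, ht3, htr_y, htr_y2]
      ring
    -- a is an integer
    have hc : ((t1 + bz : ℤ):ℚ) = 2*a := by push_cast; rw [ht1, htr_y, hbz]; ring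
    set c : ℤ := t1 + bz with hcdef
    have hs2 : ((2*(t3 - (1 - 2*m^2)*bz^2) : ℤ) : ℚ) = c^2 - 2*c*bz := by
      push_cast
      rw [ht3, htr_y2]
      rw [show ((c:ℚ)) = 2*a from hc, hbz]
      ring
    have hceven : (2:ℤ) ∣ c := by
      have h2 : c^2 - 2*c*bz = 2*(t3 - (1 - 2*m^2)*bz^2) := by exact_mod_cast hs2.symm
      have hdvd2 : (2:ℤ) ∣ c^2 := ⟨t3 - (1 - 2*m^2)*bz^2 + c*bz, by linarith⟩
      exact Int.prime_two.dvd_of_dvd_pow hdvd2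
    obtain ⟨a', ha'⟩ := hceven
    have ha : ((a':ℤ):ℚ) = a := by
      have : ((c:ℤ):ℚ) = 2*a := hc
      rw [ha'] at this
      push_cast at this ⊢
      linarith
    refine ⟨a', bz, ?_⟩
    have hcoe : ((a' • (1:𝓞 K) + bz • B : 𝓞 K) : K) = (a':K) + (bz:K)*β := by
      rw [RingOfIntegers.coe_eq_algebraMap, map_add, map_zsmul, map_zsmul, map_one,
        (show algebraMap (𝓞 K) K B = β from rfl), zsmul_eq_mul, zsmul_eq_mul, mul_one]
    apply NumberField.RingOfIntegers.ext
    rw [hcoe]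
    show y = _
    rw [hy, ← ha, ← hbz]
    push_cast
    ring
  -- ℤ-linear independence of 1, B
  have liZ : LinearIndependent ℤ ![(1 : 𝓞 K), B] := by
    rw [LinearIndependent.pair_iff]
    intro s t hst
    have h1 : (s:ℚ) • (1:K) + (t:ℚ) • β = 0 := by
      have h2 := congrArg (algebraMap (𝓞 K) K) hst
      rw [map_add, map_zsmul, map_zsmul, map_one, map_zero, (show algebraMap (𝓞 K) K B = β from rfl),
        zsmul_eq_mul, zsmul_eq_mul, mul_one] at h2
      rw [Algebra.smul_def, Algebra.smul_def, eq_ratCast (algebraMap ℚ K),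
        eq_ratCast (algebraMap ℚ K), mul_one]
      push_cast
      exact_mod_cast h2
    obtain ⟨hs, ht⟩ := LinearIndependent.pair_iff.mp liQ _ _ h1
    exact ⟨by exact_mod_cast hs, by exact_mod_cast ht⟩
  -- ℤ-basis of the ring of integers
  have hspan' : ⊤ ≤ Submodule.span ℤ (Set.range ![(1 : 𝓞 K), B]) := by
    intro x _
    obtain ⟨a', bz, hx⟩ := hspan x
    rw [hx]
    apply Submodule.add_mem
    · exact Submodule.smul_mem _ _ (Submodule.subset_span ⟨0, rfl⟩)
    · exact Submodule.smul_mem _ _ (Submodule.subset_span ⟨1, rfl⟩)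
  set bZ : Module.Basis (Fin 2) ℤ (𝓞 K) := Module.Basis.mk liZ hspan' with hbZdef
  -- discriminant computation
  have hβ2 : β * β = ((-(m:ℚ)^2 : ℚ):K) + ((-1:ℚ):K) * β := by
    push_cast
    linear_combination hβ
  have hdisc : NumberField.discr K = 1 - 4*m^2 := by
    rw [← NumberField.discr_eq_discr K bZ]
    have hcast : ((Algebra.discr ℤ bZ : ℤ) : ℚ) = ((1 - 4*m^2 : ℤ) : ℚ) := by
      rw [show ((Algebra.discr ℤ bZ : ℤ) : ℚ) = algebraMap ℤ ℚ (Algebra.discr ℤ bZ) from rfl]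
      rw [← Algebra.discr_localizationLocalization ℤ (nonZeroDivisors ℤ) K bZ]
      set bK := bZ.localizationLocalization ℚ (nonZeroDivisors ℤ) K with hbKdef
      have hbK0 : bK 0 = (1:K) := by
        rw [hbKdef, Module.Basis.localizationLocalization_apply, hbZdef, Module.Basis.mk_apply]
        simp
      have hbK1 : bK 1 = β := by
        rw [hbKdef, Module.Basis.localizationLocalization_apply, hbZdef, Module.Basis.mk_apply]
        simp [hBdef]
        rfl
      have e00 : Algebra.trace ℚ K (bK 0 * bK 0) = 2 := by rw [hbK0, one_mul, htr1]
      have e01 : Algebra.trace ℚ K (bK 0 * bK 1) = -1 := by rw [hbK0, hbK1, one_mul, htrβ]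
      have e10 : Algebra.trace ℚ K (bK 1 * bK 0) = -1 := by rw [hbK0, hbK1, mul_one, htrβ]
      have e11 : Algebra.trace ℚ K (bK 1 * bK 1) = 1 - 2*(m:ℚ)^2 := by
        rw [hbK1, hβ2, hT (-(m:ℚ)^2) (-1)]; ring
      rw [Algebra.discr_def, Matrix.det_fin_two]
      simp only [Algebra.traceMatrix_apply, Algebra.traceForm_apply]
      rw [e00, e01, e10, e11]
      push_cast
      ring
    exact_mod_cast hcast
  have hdneg : NumberField.discr K < 0 := by
    rw [hdisc]; nlinarith [sq_nonneg m]
  refine ⟨hf1, hrank, hdisc, hdneg, ?_, ?_⟩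
  · -- H(α)/√|D| equality
    have h1 : (max |m| (max |1| |m|) : ℤ) = m := by
      rw [abs_of_pos hm, abs_one]
      omega
    have h2 : |(NumberField.discr K : ℝ)| = 4*(m:ℝ)^2 - 1 := by
      rw [hdisc]
      have : ((1 - 4*m^2 : ℤ) : ℝ) = 1 - 4*(m:ℝ)^2 := by push_cast; ring
      rw [this, abs_of_nonpos]
      · ring
      · have : (1:ℝ) ≤ (m:ℝ) := by exact_mod_cast hm
        nlinarith
    rw [h1, h2]
  · -- the limit
    have h0 : Tendsto (fun k : ℕ => ((k:ℝ))⁻¹ ^ 2) atTop (nhds 0) := by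
      have := (tendsto_natCast_atTop_atTop (R := ℝ)).inv_tendsto_atTop
      simpa using this.pow 2
    have h1 : Tendsto (fun k : ℕ => 4 - ((k:ℝ))⁻¹ ^ 2) atTop (nhds 4) := by
      simpa using tendsto_const_nhds.sub h0
    have h2 : Tendsto (fun k : ℕ => Real.sqrt (4 - ((k:ℝ))⁻¹ ^ 2)) atTop (nhds 2) := by
      have := (Real.continuous_sqrt.tendsto 4).comp h1
      simpa [show Real.sqrt 4 = 2 by
        rw [show (4:ℝ) = 2^2 by norm_num, Real.sqrt_sq]; norm_num, Function.comp_def] using this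
    have h3 : Tendsto (fun k : ℕ => (Real.sqrt (4 - ((k:ℝ))⁻¹ ^ 2))⁻¹) atTop (nhds (1/2)) := by
      simpa [one_div] using h2.inv₀ (by norm_num)
    refine h3.congr' ?_
    filter_upwards [eventually_ge_atTop 1] with k hk
    have hk0 : (0:ℝ) < (k:ℝ) := by exact_mod_cast hk
    have hrw : 4 * (k:ℝ)^2 - 1 = (k:ℝ)^2 * (4 - ((k:ℝ))⁻¹^2) := by
      field_simp
    rw [hrw, Real.sqrt_mul (sq_nonneg _), Real.sqrt_sq hk0.le]
    rw [div_mul_eq_div_div, div_self hk0.ne', one_div]
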